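/- arXiv:2004.05034 — 3 statements merged into one kernel-verified Lean document; each statement's English description precedes it below -/
import Mathlib

section
/- Let f : ℝ≥0 → ℝ be locally integrable with F(s) := ∫₀ˢ f(u) du, and suppose |F(s)/s − L| ≤ C/(1+s)^κ for all s > 0 with constants C, κ > 0. Let h : [0,t] → ℝ be continuously differentiable. Then lim_{ε→0} ∫₀ᵗ h(s) f(s/ε) ds = L ∫₀ᵗ h(s) ds. -/
open MeasureTheory Filter Set Real intervalIntegral

lemma homog_fubini (t : ℝ) (φ g : ℝ → ℝ)
    (hφ : IntegrableOn φ (Ioc 0 t)) (hg : IntegrableOn g (Ioc 0 t)) :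
    ∫ s in Ioc (0:ℝ) t, (∫ r in Ioc s t, g r) * φ s
      = ∫ r in Ioc (0:ℝ) t, g r * ∫ s in Ioc (0:ℝ) r, φ s := by
  set μ := volume.restrict (Ioc (0:ℝ) t) with hμ
  set K : ℝ × ℝ → ℝ := fun p => if p.1 < p.2 then φ p.1 * g p.2 else 0 with hK
  have hKind : K = Set.indicator {p : ℝ × ℝ | p.1 < p.2} (fun p => φ p.1 * g p.2) := by
    funext p; rw [Set.indicator_apply]; rfl
  have hKint : Integrable K (μ.prod μ) := by
    rw [hKind]
    exact (hφ.mul_prod hg).indicator (measurableSet_lt measurable_fst measurable_snd)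
  have inner1 : ∀ s ∈ Ioc (0:ℝ) t, (∫ r, K (s, r) ∂μ) = (∫ r in Ioc s t, g r) * φ s := by
    intro s hs
    have e : (fun r => K (s, r)) = Set.indicator (Ioi s) (fun r => φ s * g r) := by
      funext r; simp only [hK, Set.indicator_apply, mem_Ioi]
    rw [e, MeasureTheory.integral_indicator measurableSet_Ioi, hμ,
      Measure.restrict_restrict measurableSet_Ioi]
    have e2 : Ioi s ∩ Ioc 0 t = Ioc s t := by
      rw [Set.inter_comm, Set.Ioc_inter_Ioi, max_eq_right hs.1.le]
    rw [e2, MeasureTheory.integral_const_mul]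
    ring
  have inner2 : ∀ r ∈ Ioc (0:ℝ) t, (∫ s, K (s, r) ∂μ) = g r * ∫ s in Ioc (0:ℝ) r, φ s := by
    intro r hr
    have e : (fun s => K (s, r)) = Set.indicator (Iio r) (fun s => φ s * g r) := by
      funext s; simp only [hK, Set.indicator_apply, mem_Iio]
    rw [e, MeasureTheory.integral_indicator measurableSet_Iio, hμ,
      Measure.restrict_restrict measurableSet_Iio]
    have e2 : Iio r ∩ Ioc 0 t = Ioo 0 r := by
      ext x
      constructor
      · rintro ⟨h1, h2, _⟩; exact ⟨h2, h1⟩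
      · rintro ⟨h1, h2⟩; exact ⟨h2, h1, h2.le.trans hr.2⟩
    rw [e2, ← integral_Ioc_eq_integral_Ioo, MeasureTheory.integral_mul_const]
    ring
  have swap := MeasureTheory.integral_integral_swap (μ := μ) (ν := μ)
    (f := fun s r => K (s, r)) hKint
  calc ∫ s in Ioc (0:ℝ) t, (∫ r in Ioc s t, g r) * φ s
      = ∫ s, (∫ r, K (s, r) ∂μ) ∂μ := by
        rw [hμ]
        exact (setIntegral_congr_fun measurableSet_Ioc fun s hs => (inner1 s hs).symm)
    _ = ∫ r, (∫ s, K (s, r) ∂μ) ∂μ := swap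
    _ = ∫ r in Ioc (0:ℝ) t, g r * ∫ s in Ioc (0:ℝ) r, φ s := by
        rw [hμ]
        exact setIntegral_congr_fun measurableSet_Ioc fun r hr => inner2 r hr

/-- Homogenization lemma: if the averages `F(s)/s` of a locally integrable
function `f` converge to `L` at a quantitative rate, then for any `C¹`
weight `h` on `[0,t]` the fast-oscillating integrals
`∫₀ᵗ h(s) f(s/ε) ds` converge to `L ∫₀ᵗ h(s) ds` as `ε → 0⁺`. -/
theorem homogenization_lemma
    (f : ℝ → ℝ) (hf : LocallyIntegrable f volume)
    (L C κ t : ℝ) (hκ : 0 < κ) (hC : 0 < C) (ht : 0 < t)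
    (herg : ∀ s > (0:ℝ),
      |(∫ u in (0:ℝ)..s, f u) / s - L| ≤ C / (1 + s) ^ κ)
    (h : ℝ → ℝ) (hh : ContDiffOn ℝ 1 h (Set.Icc 0 t)) :
    Tendsto (fun ε : ℝ => ∫ s in (0:ℝ)..t, h s * f (s / ε))
      (nhdsWithin 0 (Set.Ioi 0)) (nhds (L * ∫ s in (0:ℝ)..t, h s)) := by
  set F : ℝ → ℝ := fun s => ∫ u in (0:ℝ)..s, f u with hF
  -- the derivative of h on [0, t]
  obtain ⟨h', hd, hc'⟩ : ∃ h' : ℝ → ℝ,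
      (∀ x ∈ Icc (0:ℝ) t, HasDerivWithinAt h (h' x) (Icc 0 t) x) ∧
        ContinuousOn h' (Icc 0 t) := by
    refine ⟨derivWithin h (Icc 0 t), fun x hx =>
      (hh.differentiableOn one_ne_zero x hx).hasDerivWithinAt, ?_⟩
    exact hh.continuousOn_derivWithin (uniqueDiffOn_Icc ht) le_rfl
  have hdAt : ∀ x ∈ Ioo (0:ℝ) t, HasDerivAt h (h' x) x := fun x hx =>
    (hd x (Ioo_subset_Icc_self hx)).hasDerivAt (Icc_mem_nhds hx.1 hx.2)
  have hFc : Continuous F :=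
    intervalIntegral.continuous_primitive
      (fun a b => (hf.integrableOn_isCompact isCompact_uIcc).intervalIntegrable) 0
  -- quantitative estimate
  have est : ∀ ε > (0:ℝ), ∀ r > (0:ℝ),
      |ε * F (r / ε) - L * r| ≤ C * r / (1 + r / ε) ^ κ := by
    intro ε hε r hr
    have hs' : 0 < r / ε := div_pos hr hε
    have h1 : ε * F (r / ε) - L * r = r * (F (r / ε) / (r / ε) - L) := by
      field_simp
    rw [h1, abs_mul, abs_of_pos hr]
    calc r * |F (r / ε) / (r / ε) - L| ≤ r * (C / (1 + r / ε) ^ κ) :=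
          mul_le_mul_of_nonneg_left (herg _ hs') hr.le
      _ = C * r / (1 + r / ε) ^ κ := by ring
  -- crude bound
  have one_le_pow : ∀ ε > (0:ℝ), ∀ r > (0:ℝ), (1:ℝ) ≤ (1 + r / ε) ^ κ := by
    intro ε hε r hr
    calc (1:ℝ) = 1 ^ κ := (Real.one_rpow κ).symm
      _ ≤ (1 + r / ε) ^ κ :=
        Real.rpow_le_rpow zero_le_one (by nlinarith [div_pos hr hε]) hκ.le
  have bd : ∀ ε > (0:ℝ), ∀ r ∈ Ioc (0:ℝ) t, |ε * F (r / ε)| ≤ (|L| + C) * t := by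
    intro ε hε r hr
    have h1 := est ε hε r hr.1
    have h2 : C * r / (1 + r / ε) ^ κ ≤ C * r :=
      div_le_self (mul_nonneg hC.le hr.1.le) (one_le_pow ε hε r hr.1)
    have h3 : |ε * F (r / ε)| ≤ |ε * F (r / ε) - L * r| + |L * r| := by
      have := abs_sub_abs_le_abs_sub (ε * F (r / ε)) (L * r)
      have := abs_add_le (ε * F (r / ε) - L * r) (L * r)
      calc |ε * F (r / ε)| = |(ε * F (r / ε) - L * r) + L * r| := by ring_nf
        _ ≤ _ := abs_add_le _ _
    have h4 : |L * r| ≤ |L| * t := by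
      rw [abs_mul, abs_of_pos hr.1]
      exact mul_le_mul_of_nonneg_left hr.2 (abs_nonneg L)
    nlinarith [hr.1, hr.2, abs_nonneg L]
  -- pointwise limit
  have lim_pt : ∀ r > (0:ℝ),
      Tendsto (fun ε : ℝ => ε * F (r / ε)) (nhdsWithin 0 (Set.Ioi 0)) (nhds (L * r)) := by
    intro r hr
    have hinf : Tendsto (fun ε : ℝ => (1 + r / ε) ^ κ) (nhdsWithin 0 (Set.Ioi 0)) atTop := by
      apply (tendsto_rpow_atTop hκ).comp
      apply tendsto_atTop_add_const_left
      have : Tendsto (fun ε : ℝ => r * ε⁻¹) (nhdsWithin 0 (Set.Ioi 0)) atTop :=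
        tendsto_inv_nhdsGT_zero.const_mul_atTop hr
      exact this.congr fun ε => (div_eq_mul_inv r ε).symm
    have h0 : Tendsto (fun ε : ℝ => C * r / (1 + r / ε) ^ κ)
        (nhdsWithin 0 (Set.Ioi 0)) (nhds 0) := tendsto_const_nhds.div_atTop hinf
    have hsq : Tendsto (fun ε : ℝ => ε * F (r / ε) - L * r)
        (nhdsWithin 0 (Set.Ioi 0)) (nhds 0) := by
      apply squeeze_zero_norm' _ h0
      filter_upwards [self_mem_nhdsWithin] with ε hε
      rw [Real.norm_eq_abs]
      exact est ε hε r hr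
    have := hsq.add_const (L * r)
    simpa using this
  -- integrability facts
  have hc'i : IntegrableOn h' (Icc 0 t) := hc'.integrableOn_Icc
  have hprimc : ContinuousOn (fun s => ∫ r in s..t, h' r) (uIcc 0 t) :=
    intervalIntegral.continuousOn_primitive_interval_left
      (by rwa [uIcc_of_le ht.le])
  -- the integration-by-parts identity for fixed ε > 0
  have key : ∀ ε ∈ Set.Ioi (0:ℝ),
      (∫ s in (0:ℝ)..t, h s * f (s / ε))
        = h t * (ε * F (t / ε)) - ∫ r in (0:ℝ)..t, h' r * (ε * F (r / ε)) := by
    intro ε hε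
    replace hε : 0 < ε := hε
    set φ : ℝ → ℝ := fun s => f (s / ε) with hφdef
    have hφi : IntervalIntegrable φ volume 0 t := by
      have h0 : IntervalIntegrable f volume 0 (t / ε) :=
        (hf.integrableOn_isCompact isCompact_uIcc).intervalIntegrable
      have h1 := h0.comp_mul_left (c := ε⁻¹)
      have e1 : (0:ℝ) / ε⁻¹ = 0 := zero_div _
      have e2 : (t / ε) / ε⁻¹ = t := by field_simp
      rw [e1, e2] at h1
      have e3 : (fun x => f (ε⁻¹ * x)) = φ := by
        funext x; rw [hφdef]; rw [inv_mul_eq_div]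
      rwa [e3] at h1
    have hφIoc : IntegrableOn φ (Ioc 0 t) :=
      (intervalIntegrable_iff_integrableOn_Ioc_of_le ht.le).1 hφi
    have Geq : ∀ r : ℝ, (∫ s in (0:ℝ)..r, φ s) = ε * F (r / ε) := by
      intro r
      rw [hφdef]
      rw [intervalIntegral.integral_comp_div (hε.ne') (f := f)]
      simp [hF, smul_eq_mul]
    have hsub : ∀ s ∈ Icc (0:ℝ) t, h t - h s = ∫ r in s..t, h' r := by
      intro s hs
      refine (integral_eq_sub_of_hasDeriv_right_of_le hs.2
        (hh.continuousOn.mono (Icc_subset_Icc hs.1 le_rfl)) (fun x hx => ?_) ?_).symm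
      · exact (hdAt x ⟨lt_of_le_of_lt hs.1 hx.1, hx.2⟩).hasDerivWithinAt
      · have : ContinuousOn h' (uIcc s t) := by
          rw [uIcc_of_le hs.2]
          exact hc'.mono (Icc_subset_Icc hs.1 le_rfl)
        exact this.intervalIntegrable
    have hmul : IntervalIntegrable (fun s => (∫ r in s..t, h' r) * φ s) volume 0 t :=
      hφi.continuousOn_mul hprimc
    have fub : (∫ s in (0:ℝ)..t, (∫ r in s..t, h' r) * φ s)
        = ∫ r in (0:ℝ)..t, h' r * (ε * F (r / ε)) := by
      rw [intervalIntegral.integral_of_le ht.le, intervalIntegral.integral_of_le ht.le]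
      have step1 : (∫ s in Ioc (0:ℝ) t, (∫ r in s..t, h' r) * φ s)
          = ∫ s in Ioc (0:ℝ) t, (∫ r in Ioc s t, h' r) * φ s := by
        refine setIntegral_congr_fun measurableSet_Ioc fun s hs => ?_
        rw [intervalIntegral.integral_of_le hs.2]
      rw [step1, homog_fubini t φ h' hφIoc
        (hc'i.mono_set Ioc_subset_Icc_self)]
      refine setIntegral_congr_fun measurableSet_Ioc fun r hr => ?_
      rw [← Geq r, intervalIntegral.integral_of_le hr.1.le]
    calc (∫ s in (0:ℝ)..t, h s * φ s)
        = ∫ s in (0:ℝ)..t, (h t * φ s - (∫ r in s..t, h' r) * φ s) := by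
          refine intervalIntegral.integral_congr fun s hs => ?_
          rw [uIcc_of_le ht.le] at hs
          rw [← sub_mul, ← hsub s hs]; ring
      _ = h t * (∫ s in (0:ℝ)..t, φ s) - ∫ s in (0:ℝ)..t, (∫ r in s..t, h' r) * φ s := by
          rw [intervalIntegral.integral_sub (hφi.const_mul _) hmul,
            intervalIntegral.integral_const_mul]
      _ = h t * (ε * F (t / ε)) - ∫ r in (0:ℝ)..t, h' r * (ε * F (r / ε)) := by
          rw [Geq t, fub]
  -- limit of the boundary term
  have lim1 : Tendsto (fun ε : ℝ => h t * (ε * F (t / ε)))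
      (nhdsWithin 0 (Set.Ioi 0)) (nhds (h t * (L * t))) := (lim_pt t ht).const_mul _
  -- dominated convergence for the bulk term
  have lim2 : Tendsto (fun ε : ℝ => ∫ r in (0:ℝ)..t, h' r * (ε * F (r / ε)))
      (nhdsWithin 0 (Set.Ioi 0)) (nhds (∫ r in (0:ℝ)..t, h' r * (L * r))) := by
    have huIoc : uIoc (0:ℝ) t = Ioc 0 t := uIoc_of_le ht.le
    refine intervalIntegral.tendsto_integral_filter_of_dominated_convergence
      (bound := fun r => |h' r| * ((|L| + C) * t)) ?_ ?_ ?_ ?_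
    · refine Eventually.of_forall fun ε => ?_
      rw [huIoc]
      exact ((hc'.mono Ioc_subset_Icc_self).mul
        ((hFc.comp (continuous_id.div_const ε)).continuousOn.const_smul ε |>.congr
          (fun r _ => by simp [smul_eq_mul]))).aestronglyMeasurable measurableSet_Ioc
    · filter_upwards [self_mem_nhdsWithin] with ε hε
      refine Eventually.of_forall fun r hr => ?_
      rw [huIoc] at hr
      rw [Real.norm_eq_abs, abs_mul]
      exact mul_le_mul_of_nonneg_left (bd ε hε r hr) (abs_nonneg _)
    · have : ContinuousOn (fun r => |h' r| * ((|L| + C) * t)) (uIcc 0 t) := by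
        rw [uIcc_of_le ht.le]
        exact hc'.abs.mul continuousOn_const
      exact this.intervalIntegrable
    · refine Eventually.of_forall fun r hr => ?_
      rw [huIoc] at hr
      exact (lim_pt r hr.1).const_mul _
  -- the integration-by-parts identity at the limit
  have final : h t * (L * t) - (∫ r in (0:ℝ)..t, h' r * (L * r))
      = L * ∫ s in (0:ℝ)..t, h s := by
    have hint1 : IntervalIntegrable (fun x => h' x * (L * x)) volume 0 t := by
      have : ContinuousOn (fun x => h' x * (L * x)) (uIcc 0 t) := by
        rw [uIcc_of_le ht.le]
        exact hc'.mul ((continuous_const.mul continuous_id).continuousOn)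
      exact this.intervalIntegrable
    have hint2 : IntervalIntegrable (fun x => h x * L) volume 0 t := by
      have : ContinuousOn (fun x => h x * L) (uIcc 0 t) := by
        rw [uIcc_of_le ht.le]
        exact hh.continuousOn.mul continuousOn_const
      exact this.intervalIntegrable
    have hID : (∫ x in (0:ℝ)..t, (h' x * (L * x) + h x * L))
        = h t * (L * t) - h 0 * (L * 0) := by
      refine integral_eq_sub_of_hasDeriv_right_of_le ht.le
        (hh.continuousOn.mul ((continuous_const.mul continuous_id).continuousOn))
        (fun x hx => ?_) (hint1.add hint2)
      have d1 : HasDerivAt (fun y : ℝ => L * y) L x := by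
        simpa using (hasDerivAt_id x).const_mul L
      exact (((hdAt x hx).mul d1).congr_deriv (by ring)).hasDerivWithinAt
    rw [intervalIntegral.integral_add hint1 hint2, intervalIntegral.integral_mul_const] at hID
    have : (∫ s in (0:ℝ)..t, h s) * L = L * ∫ s in (0:ℝ)..t, h s := mul_comm _ _
    linarith [hID]
  have T := lim1.sub lim2
  rw [final] at T
  refine T.congr' ?_
  filter_upwards [self_mem_nhdsWithin] with ε hε
  exact (key ε hε).symm
end

section
/- Under the hypotheses of the previous homogenization lemma, with m^ε(t) := ∫₀ᵗ λ(s) F̄_s(t−s) ψ(Z_{s/ε}) ds where s ↦ λ(s) F̄_s(t−s) is continuously differentiable on [0,t], and with the quantitative ergodic bound |（1/u)∫₀ᵘ ψ(Z_r) dr − ψ̄| ≤ C/(1+u)^κ, we have lim_{ε→0} m^ε(t) = ψ̄ ∫₀ᵗ λ(s) F̄_s(t−s) ds. -/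
open MeasureTheory Filter Set Real Topology

/-- Integration by parts via Fubini: if `g s = g t - ∫_s^t G` on `[0,t]` with `G` continuous,
and `f` is interval integrable, then `∫_0^t g f = g t ∫_0^t f - ∫_0^t G(r) (∫_0^r f) dr`. -/
lemma ibp_fubini (g G f : ℝ → ℝ) (t : ℝ) (ht : 0 < t)
    (hGc : Continuous G) (hfm : Measurable f)
    (hfi : ∀ a b : ℝ, IntervalIntegrable f volume a b)
    (hftc : ∀ s ∈ Icc (0:ℝ) t, g s = g t - ∫ r in s..t, G r) :
    ∫ s in (0:ℝ)..t, g s * f s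
      = g t * (∫ s in (0:ℝ)..t, f s)
        - ∫ r in (0:ℝ)..t, G r * ∫ s in (0:ℝ)..r, f s := by
  set μ := volume.restrict (Ioc (0:ℝ) t) with hμ
  obtain ⟨M, hM⟩ : ∃ M, ∀ x ∈ Icc (0:ℝ) t, ‖G x‖ ≤ M :=
    isCompact_Icc.exists_bound_of_continuousOn hGc.continuousOn
  set F : ℝ × ℝ → ℝ :=
    fun p => Set.indicator {q : ℝ × ℝ | q.1 < q.2} (fun q => f q.1 * G q.2) p with hF
  have hFmeas : Measurable F :=
    ((hfm.comp measurable_fst).mul (hGc.measurable.comp measurable_snd)).indicator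
      (measurableSet_lt measurable_fst measurable_snd)
  have hfint : Integrable f μ := by
    have := (hfi 0 t)
    rwa [intervalIntegrable_iff_integrableOn_Ioc_of_le ht.le] at this
  have hdom : Integrable (fun p : ℝ × ℝ => |f p.1| * (|M| + 1)) (μ.prod μ) :=
    hfint.abs.mul_prod (integrable_const _)
  have haein : ∀ᵐ p ∂(μ.prod μ), p ∈ (Ioc (0:ℝ) t) ×ˢ (Ioc (0:ℝ) t) := by
    rw [hμ, Measure.prod_restrict]
    exact ae_restrict_mem (measurableSet_Ioc.prod measurableSet_Ioc)
  have hFint : Integrable F (μ.prod μ) := by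
    refine Integrable.mono hdom hFmeas.aestronglyMeasurable ?_
    filter_upwards [haein] with p hp
    have h2 : ‖G p.2‖ ≤ M := hM _ (Ioc_subset_Icc_self hp.2)
    have h3 : ‖F p‖ ≤ ‖f p.1 * G p.2‖ := by
      rw [hF]
      by_cases h : p ∈ {q : ℝ × ℝ | q.1 < q.2} <;>
        simp [Set.indicator_of_mem, Set.indicator_of_notMem, h, norm_nonneg,
          abs_nonneg, abs_mul, mul_nonneg]
    refine h3.trans ?_
    rw [norm_mul]
    have h4 : ‖f p.1‖ * ‖G p.2‖ ≤ ‖f p.1‖ * (|M| + 1) :=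
      mul_le_mul_of_nonneg_left
        (h2.trans ((le_abs_self M).trans (by linarith))) (norm_nonneg _)
    calc ‖f p.1‖ * ‖G p.2‖ ≤ ‖f p.1‖ * (|M| + 1) := h4
      _ ≤ ‖|f p.1| * (|M| + 1)‖ := by
          rw [Real.norm_eq_abs, Real.norm_eq_abs, abs_mul, abs_abs,
            abs_of_nonneg (by positivity : (0:ℝ) ≤ |M| + 1)]
  have hswap : ∫ s, (∫ r, F (s, r) ∂μ) ∂μ = ∫ r, (∫ s, F (s, r) ∂μ) ∂μ :=
    integral_integral_swap hFint
  have key : ∫ s in (0:ℝ)..t, (∫ r in s..t, G r) * f s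
      = ∫ r in (0:ℝ)..t, G r * ∫ s in (0:ℝ)..r, f s := by
    rw [intervalIntegral.integral_of_le ht.le, intervalIntegral.integral_of_le ht.le]
    have hL : ∫ s in Ioc (0:ℝ) t, (∫ r in s..t, G r) * f s = ∫ s, (∫ r, F (s, r) ∂μ) ∂μ := by
      refine setIntegral_congr_fun measurableSet_Ioc (fun s hs => ?_)
      have hinner : ∀ r, F (s, r) = Set.indicator (Ioi s) (fun r => f s * G r) r := by
        intro r
        by_cases h : s < r <;>
          simp [hF, Set.indicator, h]
      calc (∫ r in s..t, G r) * f s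
          = f s * ∫ r in Ioc s t, G r := by
            rw [intervalIntegral.integral_of_le hs.2, mul_comm]
        _ = ∫ r in Ioc s t, f s * G r := (MeasureTheory.integral_const_mul _ _).symm
        _ = ∫ r in Ioc (0:ℝ) t ∩ Ioi s, f s * G r := by
            rw [Ioc_inter_Ioi, sup_eq_right.mpr hs.1.le]
        _ = ∫ r in Ioc (0:ℝ) t, Set.indicator (Ioi s) (fun r => f s * G r) r := by
            rw [setIntegral_indicator measurableSet_Ioi]
        _ = ∫ r, F (s, r) ∂μ := by
            rw [hμ]
            exact setIntegral_congr_fun measurableSet_Ioc fun r _ => (hinner r).symm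
    have hR : ∫ r, (∫ s, F (s, r) ∂μ) ∂μ
        = ∫ r in Ioc (0:ℝ) t, G r * ∫ s in (0:ℝ)..r, f s := by
      refine setIntegral_congr_fun measurableSet_Ioc (fun r hr => ?_)
      have hinner : ∀ s, F (s, r) = Set.indicator (Iio r) (fun s => f s * G r) s := by
        intro s
        by_cases h : s < r <;>
          simp [hF, Set.indicator, h]
      have hset : Ioc (0:ℝ) t ∩ Iio r = Ioo 0 r := by
        ext x
        simp only [mem_inter_iff, mem_Ioc, mem_Iio, mem_Ioo]
        exact ⟨fun h => ⟨h.1.1, h.2⟩, fun h => ⟨⟨h.1, (h.2.le.trans hr.2)⟩, h.2⟩⟩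
      calc ∫ s, F (s, r) ∂μ
          = ∫ s in Ioc (0:ℝ) t, Set.indicator (Iio r) (fun s => f s * G r) s := by
            rw [hμ]
            exact setIntegral_congr_fun measurableSet_Ioc fun s _ => hinner s
        _ = ∫ s in Ioc (0:ℝ) t ∩ Iio r, f s * G r := by
            rw [setIntegral_indicator measurableSet_Iio]
        _ = ∫ s in Ioo (0:ℝ) r, f s * G r := by rw [hset]
        _ = ∫ s in Ioc (0:ℝ) r, f s * G r :=
            setIntegral_congr_set (Ioo_ae_eq_Ioc (μ := volume))
        _ = (∫ s in Ioc (0:ℝ) r, f s) * G r := by rw [MeasureTheory.integral_mul_const]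
        _ = G r * ∫ s in (0:ℝ)..r, f s := by
            rw [intervalIntegral.integral_of_le hr.1.le, mul_comm]
    rw [hL, hswap, hR]
  have hcontA : Continuous fun s => ∫ r in s..t, G r := by
    have hGi : ∀ a b : ℝ, IntervalIntegrable G volume a b := fun a b =>
      hGc.intervalIntegrable a b
    have h0 : Continuous fun s => ∫ x in t..s, G x :=
      intervalIntegral.continuous_primitive hGi t
    exact (h0.neg.congr fun s => by show -(∫ x in t..s, G x) = _; rw [← intervalIntegral.integral_symm])
  have h1 : IntervalIntegrable (fun s => g t * f s) volume 0 t := (hfi 0 t).const_mul _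
  have h2 : IntervalIntegrable (fun s => (∫ r in s..t, G r) * f s) volume 0 t :=
    (hfi 0 t).continuousOn_mul hcontA.continuousOn
  calc ∫ s in (0:ℝ)..t, g s * f s
      = ∫ s in (0:ℝ)..t, (g t - ∫ r in s..t, G r) * f s := by
        refine intervalIntegral.integral_congr (fun s hs => ?_)
        rw [← hftc s (by rwa [uIcc_of_le ht.le] at hs)]
    _ = ∫ s in (0:ℝ)..t, (g t * f s - (∫ r in s..t, G r) * f s) := by
        congr 1; ext s; ring
    _ = (∫ s in (0:ℝ)..t, g t * f s) - ∫ s in (0:ℝ)..t, (∫ r in s..t, G r) * f s :=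
        intervalIntegral.integral_sub h1 h2
    _ = g t * (∫ s in (0:ℝ)..t, f s) - ∫ r in (0:ℝ)..t, G r * ∫ s in (0:ℝ)..r, f s := by
        rw [intervalIntegral.integral_const_mul, key]

/-- The core homogenization limit, for a general `C¹` weight `g`. -/
lemma limit_of_mean_measure_aux
    (g : ℝ → ℝ)
    (ψ Z : ℝ → ℝ) (hψ : Measurable ψ) (hZ : Measurable Z)
    (hloc : LocallyIntegrable (fun u => ψ (Z u)) volume)
    (ψbar C κ : ℝ) (hκ : 0 < κ) (hC : 0 < C)
    (herg : ∀ u > (0:ℝ),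
      |(1 / u) * ∫ r in (0:ℝ)..u, ψ (Z r) - ψbar| ≤ C / (1 + u) ^ κ)
    (t : ℝ) (ht : 0 < t)
    (hg : ContDiffOn ℝ 1 g (Set.Icc 0 t)) :
    Tendsto (fun ε : ℝ => ∫ s in (0:ℝ)..t, g s * ψ (Z (s / ε)))
      (nhdsWithin 0 (Set.Ioi 0))
      (nhds (ψbar * ∫ s in (0:ℝ)..t, g s)) := by
  -- continuous extension of the derivative
  set g' : ℝ → ℝ := derivWithin g (Icc 0 t) with hg'def
  have hg'cont : ContinuousOn g' (Icc 0 t) :=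
    hg.continuousOn_derivWithin (uniqueDiffOn_Icc ht) le_rfl
  set G : ℝ → ℝ := fun r => g' (max 0 (min r t)) with hGdef
  have hclamp : ∀ r ∈ Icc (0:ℝ) t, max 0 (min r t) = r := fun r hr => by
    rw [min_eq_left hr.2, max_eq_right hr.1]
  have hGc : Continuous G := by
    have hmaps : ∀ r : ℝ, max 0 (min r t) ∈ Icc (0:ℝ) t := fun r =>
      ⟨le_max_left _ _, max_le ht.le (min_le_right _ _)⟩
    exact hg'cont.comp_continuous
      (continuous_const.max (continuous_id.min continuous_const)) hmaps
  have hGeq : ∀ x ∈ Icc (0:ℝ) t, G x = g' x := fun x hx => by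
    rw [hGdef]; simp only [hclamp x hx]
  -- FTC for g
  have hftc : ∀ s ∈ Icc (0:ℝ) t, g s = g t - ∫ r in s..t, G r := by
    intro s hs
    have heq : ∫ r in s..t, G r = g t - g s := by
      apply intervalIntegral.integral_eq_sub_of_hasDeriv_right
      · rw [uIcc_of_le hs.2]
        exact hg.continuousOn.mono (Icc_subset_Icc hs.1 le_rfl)
      · intro x hx
        rw [min_eq_left hs.2, max_eq_right hs.2] at hx
        have hx' : x ∈ Icc (0:ℝ) t := ⟨hs.1.trans hx.1.le, hx.2.le⟩
        have hd : HasDerivWithinAt g (g' x) (Icc 0 t) x :=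
          ((hg.differentiableOn one_ne_zero) x hx').hasDerivWithinAt
        have hmem : Icc (0:ℝ) t ∈ 𝓝[>] x :=
          Filter.mem_of_superset (Ioc_mem_nhdsGT_of_mem ⟨le_refl x, hx.2⟩)
            (fun y hy => ⟨(hs.1.trans hx.1.le).trans hy.1.le, hy.2⟩)
        rw [hGeq x hx']
        exact hd.mono_of_mem_nhdsWithin hmem
      · exact hGc.intervalIntegrable _ _
    rw [heq]; ring
  -- integrability of the rescaled process
  have h_int : ∀ ε : ℝ, 0 < ε → ∀ a b : ℝ,
      IntervalIntegrable (fun s => ψ (Z (s / ε))) volume a b := by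
    intro ε hε a b
    have base : IntervalIntegrable (fun u => ψ (Z u)) volume (a * ε⁻¹) (b * ε⁻¹) := by
      rw [intervalIntegrable_iff]
      exact (hloc.integrableOn_isCompact isCompact_uIcc).mono_set uIoc_subset_uIcc
    have hne : ε⁻¹ ≠ 0 := inv_ne_zero hε.ne'
    have h2 := base.comp_mul_right (c := ε⁻¹)
    rw [mul_div_cancel_right₀ _ hne, mul_div_cancel_right₀ _ hne] at h2
    simpa only [div_eq_mul_inv] using h2
  have h_int' : ∀ ε : ℝ, 0 < ε → ∀ a b : ℝ,
      IntervalIntegrable (fun s => ψ (Z (s / ε)) - ψbar) volume a b := fun ε hε a b =>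
    (h_int ε hε a b).sub intervalIntegrable_const
  -- the centered primitive
  set H : ℝ → ℝ → ℝ := fun ε x => ∫ s in (0:ℝ)..x, (ψ (Z (s / ε)) - ψbar) with hHdef
  -- quantitative bound from the ergodic hypothesis
  have hHb : ∀ ε : ℝ, 0 < ε → ∀ x : ℝ, 0 < x →
      |H ε x| ≤ x * (C / (1 + x / ε) ^ κ) := by
    intro ε hε x hx
    have hcv : H ε x = ε * ∫ u in (0:ℝ)..(x / ε), (ψ (Z u) - ψbar) := by
      have h0 := intervalIntegral.integral_comp_div (a := 0) (b := x)
        (fun u => ψ (Z u) - ψbar) hε.ne'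
      simpa [zero_div, smul_eq_mul] using h0
    set u := x / ε with hu'
    have hu : 0 < u := div_pos hx hε
    have h := herg u hu
    set I := ∫ r in (0:ℝ)..u, (ψ (Z r) - ψbar) with hI
    have h2 : (1 / u) * |I| ≤ C / (1 + u) ^ κ := by
      have := abs_mul (1 / u) I
      rw [abs_of_pos (by positivity : (0:ℝ) < 1 / u)] at this
      rw [← this]
      exact h
    have h3 : |I| ≤ u * (C / (1 + u) ^ κ) := by
      have h4 := mul_le_mul_of_nonneg_left h2 hu.le
      calc |I| = u * ((1 / u) * |I|) := by field_simp
        _ ≤ u * (C / (1 + u) ^ κ) := h4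
    calc |H ε x| = ε * |I| := by rw [hcv, abs_mul, abs_of_pos hε]
      _ ≤ ε * (u * (C / (1 + u) ^ κ)) := mul_le_mul_of_nonneg_left h3 hε.le
      _ = x * (C / (1 + u) ^ κ) := by
          rw [← mul_assoc]
          congr 1
          rw [hu']
          field_simp
  -- limit of the bound
  have hBto : ∀ x : ℝ, 0 < x →
      Tendsto (fun ε : ℝ => x * (C / (1 + x / ε) ^ κ)) (𝓝[>] 0) (𝓝 0) := by
    intro x hx
    have h1 : Tendsto (fun ε : ℝ => x / ε) (𝓝[>] (0:ℝ)) atTop := by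
      simpa [div_eq_mul_inv] using tendsto_inv_nhdsGT_zero.const_mul_atTop hx
    have h2 : Tendsto (fun ε : ℝ => 1 + x / ε) (𝓝[>] (0:ℝ)) atTop :=
      tendsto_atTop_add_const_left _ _ h1
    have h3 : Tendsto (fun ε : ℝ => (1 + x / ε) ^ κ) (𝓝[>] (0:ℝ)) atTop :=
      (tendsto_rpow_atTop hκ).comp h2
    have h4 : Tendsto (fun ε : ℝ => C / (1 + x / ε) ^ κ) (𝓝[>] (0:ℝ)) (𝓝 0) :=
      tendsto_const_nhds.div_atTop h3
    have h5 := h4.const_mul x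
    simpa using h5
  -- uniform-in-ε bound: `|H ε x| ≤ x * C` on `(0, t]`
  have hone : ∀ ε : ℝ, 0 < ε → ∀ x : ℝ, 0 ≤ x → (1:ℝ) ≤ (1 + x / ε) ^ κ := by
    intro ε hε x hx
    exact Real.one_le_rpow (by linarith [div_nonneg hx hε.le]) hκ.le
  -- global bound for G
  obtain ⟨MG, hMG'⟩ : ∃ MG, ∀ x ∈ Icc (0:ℝ) t, ‖g' x‖ ≤ MG :=
    isCompact_Icc.exists_bound_of_continuousOn hg'cont
  have hMG : ∀ r : ℝ, ‖G r‖ ≤ MG := fun r =>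
    hMG' _ ⟨le_max_left _ _, max_le ht.le (min_le_right _ _)⟩
  have hMGnn : 0 ≤ MG := (norm_nonneg _).trans (hMG 0)
  -- continuity of H ε
  have hHc : ∀ ε : ℝ, 0 < ε → Continuous (H ε) := fun ε hε =>
    intervalIntegral.continuous_primitive (h_int' ε hε) 0
  -- Term 1
  have T1 : Tendsto (fun ε : ℝ => g t * H ε t) (𝓝[>] 0) (𝓝 0) := by
    apply squeeze_zero_norm' (a := fun ε => |g t| * (t * (C / (1 + t / ε) ^ κ)))
    · filter_upwards [self_mem_nhdsWithin] with ε hε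
      rw [norm_mul, Real.norm_eq_abs, Real.norm_eq_abs]
      exact mul_le_mul_of_nonneg_left (hHb ε hε t ht) (abs_nonneg _)
    · simpa using (hBto t ht).const_mul |g t|
  -- Term 2
  have T2 : Tendsto (fun ε : ℝ => ∫ r in (0:ℝ)..t, G r * H ε r) (𝓝[>] 0) (𝓝 0) := by
    have hD : Tendsto (fun ε : ℝ => ∫ r in (0:ℝ)..t, G r * H ε r) (𝓝[>] 0)
        (𝓝 (∫ r in (0:ℝ)..t, (0:ℝ))) := by
      apply intervalIntegral.tendsto_integral_filter_of_dominated_convergence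
        (bound := fun r => MG * (r * C))
      · filter_upwards [self_mem_nhdsWithin] with ε hε
        exact (hGc.mul (hHc ε hε)).aestronglyMeasurable.restrict
      · filter_upwards [self_mem_nhdsWithin] with ε hε
        refine ae_of_all _ fun x hx => ?_
        rw [uIoc_of_le ht.le] at hx
        have hb1 : |H ε x| ≤ x * C := by
          refine (hHb ε hε x hx.1).trans ?_
          exact mul_le_mul_of_nonneg_left
            (div_le_self hC.le (hone ε hε x hx.1.le)) hx.1.le
        rw [norm_mul]
        exact mul_le_mul (hMG x) (by rwa [Real.norm_eq_abs]) (norm_nonneg _) hMGnn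
      · exact ((continuous_const.mul
          (continuous_id.mul continuous_const)).intervalIntegrable _ _)
      · refine ae_of_all _ fun x hx => ?_
        rw [uIoc_of_le ht.le] at hx
        apply squeeze_zero_norm' (a := fun ε => ‖G x‖ * (x * (C / (1 + x / ε) ^ κ)))
        · filter_upwards [self_mem_nhdsWithin] with ε hε
          rw [norm_mul]
          exact mul_le_mul_of_nonneg_left (by
            rw [Real.norm_eq_abs]; exact hHb ε hε x hx.1) (norm_nonneg _)
        · simpa using (hBto x hx.1).const_mul ‖G x‖
    simpa using hD
  -- the integration-by-parts identity, eventually in ε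
  have hid : ∀ᶠ ε in 𝓝[>] (0:ℝ),
      ∫ s in (0:ℝ)..t, g s * (ψ (Z (s / ε)) - ψbar)
        = g t * H ε t - ∫ r in (0:ℝ)..t, G r * H ε r := by
    filter_upwards [self_mem_nhdsWithin] with ε hε
    exact ibp_fubini g G (fun s => ψ (Z (s / ε)) - ψbar) t ht hGc
      (((hψ.comp hZ).comp (measurable_id.div_const ε)).sub measurable_const)
      (h_int' ε hε) hftc
  have key : Tendsto (fun ε : ℝ => ∫ s in (0:ℝ)..t, g s * (ψ (Z (s / ε)) - ψbar))
      (𝓝[>] 0) (𝓝 0) := by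
    have h := T1.sub T2
    rw [sub_zero] at h
    exact Tendsto.congr' (hid.mono fun ε h' => h'.symm) h
  -- splitting off the constant
  have hsplit : ∀ᶠ ε in 𝓝[>] (0:ℝ),
      (∫ s in (0:ℝ)..t, g s * (ψ (Z (s / ε)) - ψbar)) + ψbar * ∫ s in (0:ℝ)..t, g s
        = ∫ s in (0:ℝ)..t, g s * ψ (Z (s / ε)) := by
    filter_upwards [self_mem_nhdsWithin] with ε hε
    have hgc : ContinuousOn g (uIcc (0:ℝ) t) := by
      rw [uIcc_of_le ht.le]; exact hg.continuousOn
    have hgf : IntervalIntegrable (fun s => g s * ψ (Z (s / ε))) volume 0 t :=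
      (h_int ε hε 0 t).continuousOn_mul hgc
    have hgcc : IntervalIntegrable (fun s => g s * ψbar) volume 0 t :=
      (hgc.mul continuousOn_const).intervalIntegrable
    have hsub : ∫ s in (0:ℝ)..t, g s * (ψ (Z (s / ε)) - ψbar)
        = (∫ s in (0:ℝ)..t, g s * ψ (Z (s / ε))) - ∫ s in (0:ℝ)..t, g s * ψbar := by
      rw [← intervalIntegral.integral_sub hgf hgcc]
      congr 1; ext s; ring
    rw [hsub, intervalIntegral.integral_mul_const]
    ring
  have hfinal := key.add (tendsto_const_nhds
    (x := ψbar * ∫ s in (0:ℝ)..t, g s) (f := 𝓝[>] (0:ℝ)))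
  rw [zero_add] at hfinal
  exact Tendsto.congr' hsplit hfinal

/-- Theorem 3.2 of the paper: convergence of the quenched mean
`m^ε(t) = ∫₀ᵗ λ(s) F̄_s(t-s) ψ(Z_{s/ε}) ds` to `ψ̄ ∫₀ᵗ λ(s) F̄_s(t-s) ds`. -/
theorem limit_of_mean_measure
    (lam : ℝ → ℝ) (hlam_cont : Continuous lam) (hlam_nonneg : ∀ s, 0 ≤ lam s)
    (K : ℝ) (hlam_bdd : ∀ s, lam s ≤ K)
    (Fbar : ℝ → ℝ → ℝ)
    (ψ Z : ℝ → ℝ) (hψ : Measurable ψ) (hψ_nonneg : ∀ x, 0 ≤ ψ x)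
    (hZ : Measurable Z)
    (hloc : LocallyIntegrable (fun u => ψ (Z u)) volume)
    (ψbar C κ : ℝ) (hκ : 0 < κ) (hC : 0 < C)
    (herg : ∀ u > (0:ℝ),
      |(1 / u) * ∫ r in (0:ℝ)..u, ψ (Z r) - ψbar| ≤ C / (1 + u) ^ κ)
    (t : ℝ) (ht : 0 < t)
    (hg : ContDiffOn ℝ 1 (fun s => lam s * Fbar s (t - s)) (Set.Icc 0 t)) :
    Tendsto (fun ε : ℝ =>
        ∫ s in (0:ℝ)..t, lam s * Fbar s (t - s) * ψ (Z (s / ε)))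
      (nhdsWithin 0 (Set.Ioi 0))
      (nhds (ψbar * ∫ s in (0:ℝ)..t, lam s * Fbar s (t - s))) :=
  limit_of_mean_measure_aux (fun s => lam s * Fbar s (t - s))
    ψ Z hψ hZ hloc ψbar C κ hκ hC herg t ht hg
end

section
/- Let Ψ : [0,∞) × ℝ^d → ℝ be bounded and uniformly continuous in both variables jointly, and let Z : [0,∞) → ℝ^d be a fixed measurable path such that for every s ≥ 0, lim_{T→∞} (1/T)∫₀^T Ψ(s, Z_u) du = ∫ Ψ(s,y) π(dy) for a probability measure π, with this convergence uniform in s. Then for every t > 0, lim_{ε→0} ∫₀ᵗ Ψ(s, Z_{s/ε}) ds = ∫₀ᵗ (∫ Ψ(s,y) π(dy)) ds. -/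
open MeasureTheory Filter Set Real

lemma key_ergodic_scaling (g : ℝ → ℝ) (L a : ℝ) (ha : 0 ≤ a)
    (h : Tendsto (fun T : ℝ => (1 / T) * ∫ u in (0:ℝ)..T, g u) atTop (nhds L)) :
    Tendsto (fun ε : ℝ => ε * ∫ u in (0:ℝ)..(a / ε), g u)
      (nhdsWithin 0 (Set.Ioi 0)) (nhds (a * L)) := by
  rcases eq_or_lt_of_le ha with rfl | ha'
  · simp only [zero_div, intervalIntegral.integral_same, mul_zero, zero_mul]
    exact tendsto_const_nhds
  · have h1 : Tendsto (fun ε : ℝ => a / ε) (nhdsWithin (0:ℝ) (Set.Ioi 0)) atTop := by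
      have := Tendsto.const_mul_atTop ha' (tendsto_inv_nhdsGT_zero (𝕜 := ℝ))
      simpa [div_eq_mul_inv] using this
    have h2 : Tendsto (fun ε : ℝ => (1 / (a / ε)) * ∫ u in (0:ℝ)..(a / ε), g u)
        (nhdsWithin 0 (Set.Ioi 0)) (nhds L) := h.comp h1
    have h3 := h2.const_mul a
    refine h3.congr' ?_
    filter_upwards [self_mem_nhdsWithin] with ε hε
    have hε' : (0:ℝ) < ε := hε
    rw [one_div_div]
    field_simp

/-- Section 5.1 generalization: for a bounded, jointly uniformly continuous
intensity `Ψ` and a path `Z` whose ergodic averages of `Ψ(s, Z_·)` converge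
uniformly in `s` to the `π`-average, the fast-oscillating integral
`∫₀ᵗ Ψ(s, Z_{s/ε}) ds` converges to `∫₀ᵗ ∫ Ψ(s,y) pim(dy) ds`. -/
theorem general_intensity_homogenization
    {dd : ℕ} (Ψ : ℝ → (Fin dd → ℝ) → ℝ)
    (hΨ_bdd : ∃ K : ℝ, ∀ s y, |Ψ s y| ≤ K)
    (hΨ_uc : UniformContinuous (fun p : ℝ × (Fin dd → ℝ) => Ψ p.1 p.2))
    (Z : ℝ → (Fin dd → ℝ)) (hZ : Measurable Z)
    (pim : Measure (Fin dd → ℝ)) [IsProbabilityMeasure pim]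
    (herg : TendstoUniformly
      (fun T : ℝ => fun s : ℝ => (1 / T) * ∫ u in (0:ℝ)..T, Ψ s (Z u))
      (fun s : ℝ => ∫ y, Ψ s y ∂pim) atTop) :
    ∀ t > (0:ℝ),
      Tendsto (fun ε : ℝ => ∫ s in (0:ℝ)..t, Ψ s (Z (s / ε)))
        (nhdsWithin 0 (Set.Ioi 0))
        (nhds (∫ s in (0:ℝ)..t, ∫ y, Ψ s y ∂pim)) := by
  obtain ⟨K, hK⟩ := hΨ_bdd
  have hΨc : Continuous fun p : ℝ × (Fin dd → ℝ) => Ψ p.1 p.2 := hΨ_uc.continuous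
  set Ψb : ℝ → ℝ := fun s => ∫ y, Ψ s y ∂pim with hΨbdef
  -- interval integrability of bounded measurable functions
  have hIIbdd : ∀ f : ℝ → ℝ, Measurable f → (∀ x, |f x| ≤ K) →
      ∀ a b : ℝ, IntervalIntegrable f volume a b := by
    intro f hf hb a b
    refine (intervalIntegrable_const (c := K)).mono_fun' hf.aestronglyMeasurable.restrict ?_
    exact ae_of_all _ fun x => by simpa [Real.norm_eq_abs] using hb x
  have hmeasZ : ∀ s₀ : ℝ, Measurable fun u : ℝ => Ψ s₀ (Z u) := fun s₀ =>
    ((hΨc.comp (continuous_const.prodMk continuous_id)).measurable).comp hZ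
  have hIIg : ∀ (s₀ a b : ℝ), IntervalIntegrable (fun u => Ψ s₀ (Z u)) volume a b :=
    fun s₀ a b => hIIbdd _ (hmeasZ s₀) (fun x => hK s₀ (Z x)) a b
  have hmeasF : ∀ ε : ℝ, Measurable fun s : ℝ => Ψ s (Z (s / ε)) := fun ε =>
    hΨc.measurable.comp (measurable_id.prodMk (hZ.comp (measurable_id.div_const ε)))
  have hIIF : ∀ (ε a b : ℝ), IntervalIntegrable (fun s => Ψ s (Z (s / ε))) volume a b :=
    fun ε a b => hIIbdd _ (hmeasF ε) (fun x => hK x _) a b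
  have hIIfro : ∀ (s₀ ε a b : ℝ),
      IntervalIntegrable (fun s => Ψ s₀ (Z (s / ε))) volume a b := fun s₀ ε a b =>
    hIIbdd _ ((hmeasZ s₀).comp (measurable_id.div_const ε)) (fun x => hK s₀ _) a b
  have hIntpim : ∀ s : ℝ, Integrable (fun y => Ψ s y) pim := by
    intro s
    refine (integrable_const K).mono'
      ((hΨc.comp (continuous_const.prodMk continuous_id)).aestronglyMeasurable) ?_
    exact ae_of_all _ fun y => by simpa [Real.norm_eq_abs] using hK s y
  -- modulus of continuity for Ψb
  have hΨbmod : ∀ r : ℝ, 0 < r → ∀ η : ℝ,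
      (∀ {p q : ℝ × (Fin dd → ℝ)}, dist p q < η → dist (Ψ p.1 p.2) (Ψ q.1 q.2) < r) →
      ∀ s s' : ℝ, |s - s'| < η → |Ψb s - Ψb s'| ≤ r := by
    intro r hr η hu s s' hss
    have hdiff : Ψb s - Ψb s' = ∫ y, (Ψ s y - Ψ s' y) ∂pim :=
      (integral_sub (hIntpim s) (hIntpim s')).symm
    rw [hdiff, ← Real.norm_eq_abs]
    have hb : ∀ᵐ y ∂pim, ‖Ψ s y - Ψ s' y‖ ≤ r := by
      refine ae_of_all _ fun y => ?_
      have hd : dist ((s, y) : ℝ × (Fin dd → ℝ)) (s', y) < η := by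
        simpa [Prod.dist_eq, Real.dist_eq] using hss
      have := (hu hd).le
      rwa [Real.dist_eq, ← Real.norm_eq_abs] at this
    have := norm_integral_le_of_norm_le_const hb
    simpa using this
  have hΨbc : Continuous Ψb := by
    rw [Metric.continuous_iff]
    intro s r hr
    obtain ⟨η, hη, hu⟩ := Metric.uniformContinuous_iff.mp hΨ_uc (r / 2) (by positivity)
    refine ⟨η, hη, fun s' hs' => ?_⟩
    rw [Real.dist_eq] at hs' ⊢
    have := hΨbmod (r / 2) (by positivity) η (fun {p q} h => hu h) s' s hs'
    linarith
  intro t ht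
  rw [Metric.tendsto_nhds]
  intro δ hδ
  set δ' : ℝ := δ / (6 * t) with hδ'def
  have hδ'pos : 0 < δ' := by positivity
  obtain ⟨η, hη, hunif⟩ := Metric.uniformContinuous_iff.mp hΨ_uc δ' hδ'pos
  obtain ⟨n, hn⟩ := exists_nat_gt (t / η)
  have hn0 : 0 < (n : ℝ) := lt_trans (div_pos ht hη) hn
  have hn0' : (n : ℝ) ≠ 0 := ne_of_gt hn0
  set c : ℝ := t / n with hcdef
  have hc : 0 < c := div_pos ht hn0
  have hcη : c < η := by
    rw [hcdef, div_lt_iff₀ hn0]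
    have := (div_lt_iff₀ hη).mp hn
    linarith
  set A : ℕ → ℝ := fun i => (i : ℝ) * c with hAdef
  have hAstep : ∀ i : ℕ, A (i + 1) - A i = c := by
    intro i; simp only [hAdef]; push_cast; ring
  have hA0 : A 0 = 0 := by simp [hAdef]
  have hAn : A n = t := by rw [hAdef, hcdef]; field_simp
  have hAnn : ∀ i : ℕ, 0 ≤ A i := fun i => mul_nonneg (Nat.cast_nonneg i) hc.le
  have hptw : ∀ s₀ : ℝ, Tendsto (fun T : ℝ => (1 / T) * ∫ u in (0:ℝ)..T, Ψ s₀ (Z u))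
      atTop (nhds (Ψb s₀)) := fun s₀ => herg.tendsto_at s₀
  -- the eventual smallness of the frozen ergodic averages
  have hev : ∀ᶠ ε in nhdsWithin (0:ℝ) (Set.Ioi 0), ∀ i ∈ Finset.range n,
      |ε * (∫ u in (0:ℝ)..(A i / ε), Ψ (A i) (Z u)) - A i * Ψb (A i)| < δ / (6 * n) ∧
      |ε * (∫ u in (0:ℝ)..(A (i + 1) / ε), Ψ (A i) (Z u)) - A (i + 1) * Ψb (A i)| < δ / (6 * n) := by
    rw [Filter.eventually_all_finset]
    intro i _
    have hd : 0 < δ / (6 * n) := by positivity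
    have h1 := key_ergodic_scaling (fun u => Ψ (A i) (Z u)) (Ψb (A i)) (A i) (hAnn i) (hptw (A i))
    have h2 := key_ergodic_scaling (fun u => Ψ (A i) (Z u)) (Ψb (A i)) (A (i + 1))
      (hAnn (i + 1)) (hptw (A i))
    filter_upwards [Metric.tendsto_nhds.mp h1 _ hd, Metric.tendsto_nhds.mp h2 _ hd] with ε he1 he2
    rw [Real.dist_eq] at he1 he2
    exact ⟨he1, he2⟩
  filter_upwards [hev, self_mem_nhdsWithin] with ε hP hεpos
  have hε : (0:ℝ) < ε := hεpos
  have hεne : ε ≠ 0 := ne_of_gt hε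
  -- per-interval bound
  have hterm : ∀ i ∈ Finset.range n,
      |∫ s in A i..A (i + 1), (Ψ s (Z (s / ε)) - Ψb s)| ≤ δ' * c + δ / (3 * n) + δ' * c := by
    intro i hi
    obtain ⟨hP1, hP2⟩ := hP i hi
    have hAle : A i ≤ A (i + 1) := by have := hAstep i; linarith
    -- first piece
    have hA1 : |∫ s in A i..A (i + 1), (Ψ s (Z (s / ε)) - Ψ (A i) (Z (s / ε)))| ≤ δ' * c := by
      have hb : ∀ x ∈ Set.uIoc (A i) (A (i + 1)),
          ‖Ψ x (Z (x / ε)) - Ψ (A i) (Z (x / ε))‖ ≤ δ' := by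
        intro x hx
        rw [Set.uIoc_of_le hAle] at hx
        have hxd : |x - A i| < η := by
          have h1 : A i < x := hx.1
          have h2 : x ≤ A (i + 1) := hx.2
          have := hAstep i
          rw [abs_of_pos (sub_pos.mpr h1)]
          linarith
        have hd : dist ((x, Z (x / ε)) : ℝ × (Fin dd → ℝ)) (A i, Z (x / ε)) < η := by
          simpa [Prod.dist_eq, Real.dist_eq] using hxd
        have := (hunif hd).le
        rwa [Real.dist_eq, ← Real.norm_eq_abs] at this
      have := intervalIntegral.norm_integral_le_of_norm_le_const hb
      rw [Real.norm_eq_abs] at this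
      calc |∫ s in A i..A (i + 1), (Ψ s (Z (s / ε)) - Ψ (A i) (Z (s / ε)))|
          ≤ δ' * |A (i + 1) - A i| := this
        _ = δ' * c := by rw [hAstep i, abs_of_pos hc]
    -- third piece
    have hC1 : |∫ s in A i..A (i + 1), (Ψb (A i) - Ψb s)| ≤ δ' * c := by
      have hb : ∀ x ∈ Set.uIoc (A i) (A (i + 1)), ‖Ψb (A i) - Ψb x‖ ≤ δ' := by
        intro x hx
        rw [Set.uIoc_of_le hAle] at hx
        have hxd : |A i - x| < η := by
          have h1 : A i < x := hx.1
          have h2 : x ≤ A (i + 1) := hx.2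
          have := hAstep i
          rw [abs_sub_comm, abs_of_pos (sub_pos.mpr h1)]
          linarith
        have := hΨbmod δ' hδ'pos η (fun {p q} h => hunif h) (A i) x hxd
        rwa [← Real.norm_eq_abs] at this
      have := intervalIntegral.norm_integral_le_of_norm_le_const hb
      rw [Real.norm_eq_abs] at this
      calc |∫ s in A i..A (i + 1), (Ψb (A i) - Ψb s)|
          ≤ δ' * |A (i + 1) - A i| := this
        _ = δ' * c := by rw [hAstep i, abs_of_pos hc]
    -- middle piece
    have hMid : (∫ s in A i..A (i + 1), Ψ (A i) (Z (s / ε)))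
        = ε * ((∫ u in (0:ℝ)..(A (i + 1) / ε), Ψ (A i) (Z u))
            - ∫ u in (0:ℝ)..(A i / ε), Ψ (A i) (Z u)) := by
      rw [intervalIntegral.integral_comp_div (f := fun u => Ψ (A i) (Z u)) hεne,
        intervalIntegral.integral_interval_sub_left (hIIg (A i) 0 (A (i + 1) / ε))
          (hIIg (A i) 0 (A i / ε)), smul_eq_mul]
    have hB1 : |(∫ s in A i..A (i + 1), Ψ (A i) (Z (s / ε))) - c * Ψb (A i)| < δ / (3 * n) := by
      have heq : (∫ s in A i..A (i + 1), Ψ (A i) (Z (s / ε))) - c * Ψb (A i)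
          = (ε * (∫ u in (0:ℝ)..(A (i + 1) / ε), Ψ (A i) (Z u)) - A (i + 1) * Ψb (A i))
            - (ε * (∫ u in (0:ℝ)..(A i / ε), Ψ (A i) (Z u)) - A i * Ψb (A i)) := by
        rw [hMid, ← hAstep i]
        ring
      rw [heq]
      calc |_ - _| ≤ |ε * (∫ u in (0:ℝ)..(A (i + 1) / ε), Ψ (A i) (Z u)) - A (i + 1) * Ψb (A i)|
            + |ε * (∫ u in (0:ℝ)..(A i / ε), Ψ (A i) (Z u)) - A i * Ψb (A i)| := abs_sub _ _
        _ < δ / (6 * n) + δ / (6 * n) := add_lt_add hP2 hP1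
        _ = δ / (3 * n) := by ring
    -- decomposition
    have hsplit : (∫ s in A i..A (i + 1), (Ψ s (Z (s / ε)) - Ψb s))
        = (∫ s in A i..A (i + 1), (Ψ s (Z (s / ε)) - Ψ (A i) (Z (s / ε))))
          + ((∫ s in A i..A (i + 1), Ψ (A i) (Z (s / ε))) - c * Ψb (A i))
          + (∫ s in A i..A (i + 1), (Ψb (A i) - Ψb s)) := by
      rw [intervalIntegral.integral_sub (hIIF ε _ _) (hΨbc.intervalIntegrable _ _),
        intervalIntegral.integral_sub (hIIF ε _ _) (hIIfro (A i) ε _ _),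
        intervalIntegral.integral_sub (intervalIntegrable_const) (hΨbc.intervalIntegrable _ _),
        intervalIntegral.integral_const, hAstep i, smul_eq_mul]
      ring
    rw [hsplit]
    calc |_ + _ + _| ≤ |_| + |(∫ s in A i..A (i + 1), Ψ (A i) (Z (s / ε))) - c * Ψb (A i)| + |_| :=
        abs_add_three _ _ _
      _ ≤ δ' * c + δ / (3 * n) + δ' * c := by
        exact add_le_add (add_le_add hA1 hB1.le) hC1
  -- sum up
  have hint : ∀ k < n, IntervalIntegrable (fun s => Ψ s (Z (s / ε)) - Ψb s) volume (A k) (A (k + 1)) :=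
    fun k _ => (hIIF ε _ _).sub (hΨbc.intervalIntegrable _ _)
  have hsum := intervalIntegral.sum_integral_adjacent_intervals (μ := volume)
    (f := fun s => Ψ s (Z (s / ε)) - Ψb s) hint
  rw [hA0, hAn] at hsum
  have hdist : dist (∫ s in (0:ℝ)..t, Ψ s (Z (s / ε))) (∫ s in (0:ℝ)..t, Ψb s)
      = |∫ s in (0:ℝ)..t, (Ψ s (Z (s / ε)) - Ψb s)| := by
    rw [Real.dist_eq, intervalIntegral.integral_sub (hIIF ε 0 t) (hΨbc.intervalIntegrable 0 t)]
  calc dist (∫ s in (0:ℝ)..t, Ψ s (Z (s / ε))) (∫ s in (0:ℝ)..t, Ψb s)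
      = |∫ s in (0:ℝ)..t, (Ψ s (Z (s / ε)) - Ψb s)| := hdist
    _ = |∑ k ∈ Finset.range n, ∫ s in A k..A (k + 1), (Ψ s (Z (s / ε)) - Ψb s)| := by rw [hsum]
    _ ≤ ∑ k ∈ Finset.range n, |∫ s in A k..A (k + 1), (Ψ s (Z (s / ε)) - Ψb s)| :=
        Finset.abs_sum_le_sum_abs _ _
    _ ≤ ∑ _k ∈ Finset.range n, (δ' * c + δ / (3 * n) + δ' * c) := Finset.sum_le_sum hterm
    _ = n * (δ' * c + δ / (3 * n) + δ' * c) := by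
        rw [Finset.sum_const, Finset.card_range, nsmul_eq_mul]
    _ = 2 * δ' * t + δ / 3 := by
        rw [hcdef]; field_simp; ring
    _ < δ := by
        have h1 : 2 * δ' * t = δ / 3 := by
          rw [hδ'def]; field_simp; ring
        linarith
end
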